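/- (Support and values of the Hasse derivatives of the coordinate function y of the Ree curve.) The polynomial p_y satisfies: D^1 p_y = X^q0; D^q0 p_y = X - X^q; D^(q0+1) p_y = 1; D^q p_y = X^(q*q0) - X^q0; D^(q+q0) p_y = -1; D^(q*q0) p_y = X^q - X^(q^2); D^(q*q0+q) p_y = 1; and D^i p_y = 0 for every integer i with 1 ≤ i ≤ q^2 - 1 and i ∉ {1, q0, q0+1, q, q+q0, q*q0, q*q0+q}. -/

import Mathlib

noncomputable section

open Polynomial

abbrev F := ZMod 3

def q0 (s : ℕ) : ℕ := 3 ^ s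
def q (s : ℕ) : ℕ := 3 ^ (2 * s + 1)

def pX : Polynomial F := X
def pY (s : ℕ) : Polynomial F :=
  X ^ (q0 s + 1) - X ^ (q s + q0 s) + X ^ (q s * (q0 s + 1)) - X ^ (q s * (q s + q0 s))
def pZ (s : ℕ) : Polynomial F :=
  X ^ (2 * q0 s + 1) - X ^ (q s + 2 * q0 s) + X ^ (q s * (2 * q0 s + 1)) - X ^ (q s * (q s + 2 * q0 s))
def ell (s : ℕ) : Polynomial F := X ^ q s - X

lemma hd_pow3 (k i : ℕ) : hasseDeriv i (X ^ (3 ^ k) : Polynomial F) =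
    if i = 0 then X ^ (3 ^ k) else if i = 3 ^ k then 1 else 0 := by
  have : (X ^ (3 ^ k) : Polynomial F) = monomial (3 ^ k) 1 := by
    rw [← C_mul_X_pow_eq_monomial, C_1, one_mul]
  rw [this, hasseDeriv_monomial]
  split_ifs with h0 hk
  · subst h0; simp [← this]
  · subst hk; simp
  · have hd : (3 : ℕ) ∣ (3 ^ k).choose i := Nat.Prime.dvd_choose_pow Nat.prime_three h0 hk
    have : (((3 ^ k).choose i : ℕ) : F) = 0 := (ZMod.natCast_eq_zero_iff _ _).mpr hd
    rw [this, zero_mul, monomial_zero_right]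

lemma hd_two (u v : ℕ) (huv : u < v) (i : ℕ) :
    hasseDeriv i (X ^ (3 ^ u + 3 ^ v) : Polynomial F) =
    if i = 0 then X ^ (3 ^ u + 3 ^ v) else if i = 3 ^ u then X ^ (3 ^ v)
    else if i = 3 ^ v then X ^ (3 ^ u) else if i = 3 ^ u + 3 ^ v then 1 else 0 := by
  have hu0 : 0 < 3 ^ u := Nat.pow_pos (n := u) (by norm_num)
  have huv' : 3 ^ u < 3 ^ v := Nat.pow_lt_pow_right (by norm_num) huv
  rw [pow_add, hasseDeriv_mul, Finset.Nat.sum_antidiagonal_eq_sum_range_succ_mk]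
  have step : ∀ a ∈ Finset.range (i + 1),
      hasseDeriv a (X ^ (3 ^ u) : Polynomial F) * hasseDeriv (i - a) (X ^ (3 ^ v) : Polynomial F)
      = (if a = 0 then X ^ (3 ^ u) *
            (if i = 0 then X ^ (3 ^ v) else if i = 3 ^ v then 1 else 0) else 0)
        + (if a = 3 ^ u then
            (if i - 3 ^ u = 0 then X ^ (3 ^ v) else if i - 3 ^ u = 3 ^ v then 1 else 0) else 0) := by
    intro a _
    rw [hd_pow3, hd_pow3]
    by_cases h0 : a = 0
    · subst h0; simp [hu0.ne]
    · by_cases h1 : a = 3 ^ u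
      · subst h1; simp [hu0.ne']
      · simp [h0, h1]
  rw [Finset.sum_congr rfl step, Finset.sum_add_distrib,
    Finset.sum_ite_eq' (Finset.range (i + 1)) 0,
    Finset.sum_ite_eq' (Finset.range (i + 1)) (3 ^ u)]
  simp only [Finset.mem_range, Nat.lt_succ_iff, Nat.zero_le, if_true, if_pos (Nat.zero_le i)]
  split_ifs <;> first | omega | simp [pow_add]

lemma hd_two' (u v : ℕ) (huv : u < v) (a b c : ℕ)
    (ha : a = 3 ^ u) (hb : b = 3 ^ v) (hc : c = a + b) (i : ℕ) :
    hasseDeriv i (X ^ c : Polynomial F) =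
    if i = 0 then X ^ c else if i = a then X ^ b
    else if i = b then X ^ a else if i = c then 1 else 0 := by
  subst ha hb hc; exact hd_two u v huv i

lemma key (s : ℕ) (hs : 1 ≤ s) (i : ℕ) :
    hasseDeriv i (pY s) =
    ((if i = 0 then X ^ (q0 s + 1) else if i = 1 then X ^ q0 s
        else if i = q0 s then (X : Polynomial F) ^ 1 else if i = q0 s + 1 then 1 else 0)
      - (if i = 0 then X ^ (q s + q0 s) else if i = q0 s then X ^ q s
        else if i = q s then X ^ q0 s else if i = q s + q0 s then 1 else 0)
      + (if i = 0 then X ^ (q s * q0 s + q s) else if i = q s then X ^ (q s * q0 s)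
        else if i = q s * q0 s then X ^ q s else if i = q s * q0 s + q s then 1 else 0)
      - (if i = 0 then X ^ (q s ^ 2 + q s * q0 s) else if i = q s * q0 s then X ^ (q s ^ 2)
        else if i = q s ^ 2 then X ^ (q s * q0 s) else if i = q s ^ 2 + q s * q0 s then 1 else 0)) := by
  have hpY : pY s = X ^ (q0 s + 1) - X ^ (q s + q0 s)
      + X ^ (q s * q0 s + q s) - X ^ (q s ^ 2 + q s * q0 s) := by
    rw [pY, mul_add, mul_add, mul_one, sq, Nat.add_comm (q s * q s)]
  rw [hpY, map_sub, map_add, map_sub,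
    hd_two' 0 s (by omega) 1 (q0 s) (q0 s + 1) (by norm_num) rfl (by omega) i,
    hd_two' s (2 * s + 1) (by omega) (q0 s) (q s) (q s + q0 s) rfl rfl (by omega) i,
    hd_two' (2 * s + 1) (3 * s + 1) (by omega) (q s) (q s * q0 s) (q s * q0 s + q s)
      rfl (by rw [q, q0, ← pow_add]; congr 1; omega) (by omega) i,
    hd_two' (3 * s + 1) (4 * s + 2) (by omega) (q s * q0 s) (q s ^ 2) (q s ^ 2 + q s * q0 s)
      (by rw [q, q0, ← pow_add]; congr 1; omega) (by rw [q, ← pow_mul]; congr 1; omega)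
      (by omega) i]

set_option maxHeartbeats 2000000 in
theorem stmt18 (s : ℕ) (hs : 1 ≤ s) :
    hasseDeriv 1 (pY s) = X ^ q0 s ∧
    hasseDeriv (q0 s) (pY s) = X - X ^ q s ∧
    hasseDeriv (q0 s + 1) (pY s) = 1 ∧
    hasseDeriv (q s) (pY s) = X ^ (q s * q0 s) - X ^ q0 s ∧
    hasseDeriv (q s + q0 s) (pY s) = -1 ∧
    hasseDeriv (q s * q0 s) (pY s) = X ^ q s - X ^ (q s ^ 2) ∧
    hasseDeriv (q s * q0 s + q s) (pY s) = 1 ∧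
    ∀ i : ℕ, 1 ≤ i → i ≤ q s ^ 2 - 1 →
      i ∉ ({1, q0 s, q0 s + 1, q s, q s + q0 s, q s * q0 s, q s * q0 s + q s} : Set ℕ) →
      hasseDeriv i (pY s) = 0 := by
  have e1 : q s * q0 s = 3 ^ (3 * s + 1) := by rw [q, q0, ← pow_add]; congr 1; omega
  have e2 : q s ^ 2 = 3 ^ (4 * s + 2) := by rw [q, ← pow_mul]; congr 1; omega
  have hA : 1 < q0 s := Nat.one_lt_pow (by omega) (by norm_num)
  have hB : q0 s < q s := Nat.pow_lt_pow_right (by norm_num) (by omega)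
  have hC : q s < q s * q0 s := by rw [e1, q]; exact Nat.pow_lt_pow_right (by norm_num) (by omega)
  have hD : q s * q0 s < q s ^ 2 := by
    rw [e1, e2]; exact Nat.pow_lt_pow_right (by norm_num) (by omega)
  have g0 : 3 ≤ q0 s := by
    calc (3:ℕ) = 3 ^ 1 := (pow_one 3).symm
    _ ≤ 3 ^ s := Nat.pow_le_pow_right (by norm_num) hs
  have g1 : 3 * q0 s ≤ q s := by
    rw [q0, q, ← pow_succ']; exact Nat.pow_le_pow_right (by norm_num) (by omega)
  have g2 : 3 * q s ≤ q s * q0 s := by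
    rw [e1, q, ← pow_succ']; exact Nat.pow_le_pow_right (by norm_num) (by omega)
  have g3 : 3 * (q s * q0 s) ≤ q s ^ 2 := by
    rw [e2, e1, ← pow_succ']; exact Nat.pow_le_pow_right (by norm_num) (by omega)
  refine ⟨?_, ?_, ?_, ?_, ?_, ?_, ?_, ?_⟩
  · rw [key s hs]; split_ifs <;> first | contradiction | omega | ring
  · rw [key s hs]; split_ifs <;> first | contradiction | omega | ring
  · rw [key s hs]; split_ifs <;> first | contradiction | omega | ring
  · rw [key s hs]; split_ifs <;> first | contradiction | omega | ring
  · rw [key s hs]; split_ifs <;> first | contradiction | omega | ring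
  · rw [key s hs]; split_ifs <;> first | contradiction | omega | ring
  · rw [key s hs]; split_ifs <;> first | contradiction | omega | ring
  · intro i hi1 hi2 hi3
    simp only [Set.mem_insert_iff, Set.mem_singleton_iff, not_or] at hi3
    obtain ⟨n1, n2, n3, n4, n5, n6, n7⟩ := hi3
    rw [key s hs]; split_ifs <;> first | contradiction | omega | ring
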